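/- Failure of elimination of finite imaginaries (standard-model form): let p₁, p₂, q₁, q₂ be pairwise distinct primes and set a = p₁·p₂ and b = q₁·q₂ in ℕ⁺. Then for every finite set X ⊆ ℕ⁺ the following holds: if every monoid automorphism f of ℕ⁺ with f({a,b}) = {a,b} fixes X pointwise, then there exists a monoid automorphism g of ℕ⁺ fixing X pointwise with g({a,b}) ≠ {a,b}. Consequently the pair {a,b} has no canonical parameter. -/

import Mathlib

namespace NoFinCP

/-- The monoid automorphism of `ℕ+` induced by a permutation of the primes. -/
def permEquiv (e : Nat.Primes ≃ Nat.Primes) : ℕ+ ≃* ℕ+ where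
  toFun n := PrimeMultiset.prod (n.factorMultiset.map e)
  invFun n := PrimeMultiset.prod (n.factorMultiset.map e.symm)
  left_inv n := by
    show PrimeMultiset.prod
      ((PrimeMultiset.prod (n.factorMultiset.map e)).factorMultiset.map e.symm) = n
    erw [PrimeMultiset.factorMultiset_prod, Multiset.map_map]
    simp [PNat.prod_factorMultiset]
    erw [Multiset.map_id, PNat.prod_factorMultiset]
  right_inv n := by
    show PrimeMultiset.prod
      ((PrimeMultiset.prod (n.factorMultiset.map e.symm)).factorMultiset.map e) = n
    erw [PrimeMultiset.factorMultiset_prod, Multiset.map_map]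
    simp [PNat.prod_factorMultiset]
    erw [Multiset.map_id, PNat.prod_factorMultiset]
  map_mul' m n := by
    show PrimeMultiset.prod ((m*n).factorMultiset.map e) = _
    erw [PNat.factorMultiset_mul, Multiset.map_add, PrimeMultiset.prod_add]

lemma permEquiv_factorMultiset (e : Nat.Primes ≃ Nat.Primes) (n : ℕ+) :
    (permEquiv e n).factorMultiset = n.factorMultiset.map e := by
  show (PrimeMultiset.prod (n.factorMultiset.map e)).factorMultiset = _
  erw [PrimeMultiset.factorMultiset_prod]

lemma permEquiv_prime (e : Nat.Primes ≃ Nat.Primes) (p : Nat.Primes) :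
    permEquiv e (p : ℕ+) = ((e p : Nat.Primes) : ℕ+) := by
  show PrimeMultiset.prod ((p : ℕ+).factorMultiset.map e) = _
  rw [PNat.factorMultiset_ofPrime]
  show PrimeMultiset.prod (({p} : Multiset Nat.Primes).map e) = _
  rw [Multiset.map_singleton]
  exact PrimeMultiset.prod_ofPrime (e p)

lemma map_swap_eq {α : Type*} [DecidableEq α] (a b : α) (m : Multiset α)
    (h : m.count a = m.count b) : m.map (Equiv.swap a b) = m := by
  ext r
  have h1 : (m.map (Equiv.swap a b)).count ((Equiv.swap a b) ((Equiv.swap a b) r))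
      = m.count ((Equiv.swap a b) r) :=
    Multiset.count_map_eq_count' _ _ (Equiv.injective _) _
  rw [Equiv.swap_apply_self] at h1
  rw [h1]
  rcases eq_or_ne r a with rfl | hra
  · rw [Equiv.swap_apply_left]; exact h.symm
  rcases eq_or_ne r b with rfl | hrb
  · rw [Equiv.swap_apply_right]; exact h
  · rw [Equiv.swap_apply_of_ne_of_ne hra hrb]

end NoFinCP


open FirstOrder Language

/-- The language `L` with one binary function symbol `·` and one constant symbol `1`. -/
def L : FirstOrder.Language :=
  ⟨fun n => match n with | 0 => Unit | 2 => Unit | _ => Empty, fun _ => Empty⟩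

/-- Any monoid is an `L`-structure, with `·` interpreted as multiplication and `1` as the
identity. In particular `ℕ+` is the standard model of Skolem arithmetic, and
`Multiplicative ℕ` is the additive `L`-structure `(ℕ, +, 0)`. -/
instance (M : Type*) [Monoid M] : L.Structure M where
  funMap {n} f x :=
    match n, f, x with
    | 0, _, _ => 1
    | 2, _, x => x 0 * x 1
  RelMap r _ := r.elim

/-- Failure of elimination of finite imaginaries: for pairwise distinct primes
`p₁, p₂, q₁, q₂`, the pair `{p₁·p₂, q₁·q₂}` has no canonical parameter: any finite set
fixed pointwise by all automorphisms fixing the pair setwise is fixed pointwise by some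
automorphism moving the pair. -/
theorem no_finite_canonical_parameter (p₁ p₂ q₁ q₂ : ℕ+)
    (hp₁ : (p₁ : ℕ).Prime) (hp₂ : (p₂ : ℕ).Prime)
    (hq₁ : (q₁ : ℕ).Prime) (hq₂ : (q₂ : ℕ).Prime)
    (hd : [p₁, p₂, q₁, q₂].Pairwise (· ≠ ·)) :
    ∀ X : Finset ℕ+,
      (∀ f : ℕ+ ≃* ℕ+,
        ({f (p₁ * p₂), f (q₁ * q₂)} : Set ℕ+) = {p₁ * p₂, q₁ * q₂} → ∀ x ∈ X, f x = x) →
      ∃ g : ℕ+ ≃* ℕ+, (∀ x ∈ X, g x = x) ∧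
        ({g (p₁ * p₂), g (q₁ * q₂)} : Set ℕ+) ≠ {p₁ * p₂, q₁ * q₂} := by

  intro X hX
  -- distinctness
  simp only [List.pairwise_cons] at hd
  obtain ⟨hA, hB, hC, -⟩ := hd
  have h12 : p₁ ≠ p₂ := hA _ (by simp)
  have h13 : p₁ ≠ q₁ := hA _ (by simp)
  have h14 : p₁ ≠ q₂ := hA _ (by simp)
  have h23 : p₂ ≠ q₁ := hB _ (by simp)
  have h24 : p₂ ≠ q₂ := hB _ (by simp)
  have h34 : q₁ ≠ q₂ := hC _ (by simp)
  set P₁ : Nat.Primes := ⟨(p₁ : ℕ), hp₁⟩ with hP₁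
  set P₂ : Nat.Primes := ⟨(p₂ : ℕ), hp₂⟩ with hP₂
  set Q₁ : Nat.Primes := ⟨(q₁ : ℕ), hq₁⟩ with hQ₁
  set Q₂ : Nat.Primes := ⟨(q₂ : ℕ), hq₂⟩ with hQ₂
  have hc1 : (P₁ : ℕ+) = p₁ := Subtype.ext rfl
  have hc2 : (P₂ : ℕ+) = p₂ := Subtype.ext rfl
  have hc3 : (Q₁ : ℕ+) = q₁ := Subtype.ext rfl
  have hc4 : (Q₂ : ℕ+) = q₂ := Subtype.ext rfl
  have coe_inj : ∀ (a b : Nat.Primes), (a : ℕ+) = (b : ℕ+) → a = b := by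
    intro a b h
    exact Subtype.ext (congrArg (fun x : ℕ+ => (x : ℕ)) h)
  have H12 : P₁ ≠ P₂ := fun h => h12 (by rw [← hc1, ← hc2, h])
  have H13 : P₁ ≠ Q₁ := fun h => h13 (by rw [← hc1, ← hc3, h])
  have H14 : P₁ ≠ Q₂ := fun h => h14 (by rw [← hc1, ← hc4, h])
  have H23 : P₂ ≠ Q₁ := fun h => h23 (by rw [← hc2, ← hc3, h])
  have H24 : P₂ ≠ Q₂ := fun h => h24 (by rw [← hc2, ← hc4, h])
  have H34 : Q₁ ≠ Q₂ := fun h => h34 (by rw [← hc3, ← hc4, h])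
  -- the automorphism σ swapping p₁ ↔ q₁ and p₂ ↔ q₂
  set eσ : Nat.Primes ≃ Nat.Primes := (Equiv.swap P₁ Q₁).trans (Equiv.swap P₂ Q₂) with heσ
  set σ : ℕ+ ≃* ℕ+ := NoFinCP.permEquiv eσ with hσdef
  have heσ1 : eσ P₁ = Q₁ := by
    simp only [heσ, Equiv.trans_apply, Equiv.swap_apply_left]
    exact Equiv.swap_apply_of_ne_of_ne H23.symm H34
  have heσ2 : eσ P₂ = Q₂ := by
    simp only [heσ, Equiv.trans_apply]
    rw [Equiv.swap_apply_of_ne_of_ne H12.symm H23, Equiv.swap_apply_left]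
  have heσ3 : eσ Q₁ = P₁ := by
    simp only [heσ, Equiv.trans_apply, Equiv.swap_apply_right]
    exact Equiv.swap_apply_of_ne_of_ne H12 H14
  have heσ4 : eσ Q₂ = P₂ := by
    simp only [heσ, Equiv.trans_apply]
    rw [Equiv.swap_apply_of_ne_of_ne H14.symm H34.symm, Equiv.swap_apply_right]
  have hσa : σ (p₁ * p₂) = q₁ * q₂ := by
    rw [map_mul, ← hc1, ← hc2, hσdef, NoFinCP.permEquiv_prime, NoFinCP.permEquiv_prime,
      heσ1, heσ2, hc3, hc4]
  have hσb : σ (q₁ * q₂) = p₁ * p₂ := by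
    rw [map_mul, ← hc3, ← hc4, hσdef, NoFinCP.permEquiv_prime, NoFinCP.permEquiv_prime,
      heσ3, heσ4, hc1, hc2]
  have hσfix : ∀ x ∈ X, σ x = x := by
    apply hX
    rw [hσa, hσb, Set.pair_comm]
  -- the automorphism g swapping only p₁ ↔ q₁
  refine ⟨NoFinCP.permEquiv (Equiv.swap P₁ Q₁), ?_, ?_⟩
  · intro x hx
    have hmσ : x.factorMultiset.map eσ = x.factorMultiset := by
      have := congrArg PNat.factorMultiset (hσfix x hx)
      rwa [NoFinCP.permEquiv_factorMultiset] at this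
    have hcount : x.factorMultiset.count P₁ = x.factorMultiset.count Q₁ := by
      have h1 : (x.factorMultiset.map eσ).count (eσ P₁) = x.factorMultiset.count P₁ :=
        Multiset.count_map_eq_count' _ _ eσ.injective _
      rw [hmσ, heσ1] at h1
      exact h1.symm
    have hmap : x.factorMultiset.map (Equiv.swap P₁ Q₁) = x.factorMultiset :=
      NoFinCP.map_swap_eq _ _ _ hcount
    have := congrArg PrimeMultiset.prod
      ((NoFinCP.permEquiv_factorMultiset (Equiv.swap P₁ Q₁) x).trans hmap)
    rwa [PNat.prod_factorMultiset, PNat.prod_factorMultiset] at this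
  · have hga : NoFinCP.permEquiv (Equiv.swap P₁ Q₁) (p₁ * p₂) = q₁ * p₂ := by
      rw [map_mul, ← hc1, ← hc2, NoFinCP.permEquiv_prime, NoFinCP.permEquiv_prime,
        Equiv.swap_apply_left, Equiv.swap_apply_of_ne_of_ne H12.symm H23, hc2, hc3]
    intro hcontra
    have hmem : (q₁ * p₂ : ℕ+) ∈ ({p₁ * p₂, q₁ * q₂} : Set ℕ+) := by
      rw [← hcontra, ← hga]
      exact Set.mem_insert _ _
    rcases hmem with h | h
    · exact h13 (mul_right_cancel ((hc3 ▸ hc1 ▸ h : q₁ * p₂ = p₁ * p₂))).symm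
    · exact h24 (mul_left_cancel (h : q₁ * p₂ = q₁ * q₂))
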